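/- If the kneading map satisfies Q(k) = max(0, k − d) for all k (for a fixed d ∈ ℕ), then the all-zero sequence ⟨0⟩ has exactly d preimages under the add-and-carry map α on E. -/

import Mathlib

/-- Tail sum `Σ_{k > i} e_k S_k` of a digit sequence. -/
noncomputable def tailSum (S e : ℕ → ℕ) (i : ℕ) : ℕ := ∑' k : ℕ, if i < k then e k * S k else 0

/-- Greedy representation of `n` in the cutting-time base `(S_i)`. -/
noncomputable def IsGreedyRep (S : ℕ → ℕ) (n : ℕ) (e : ℕ → ℕ) : Prop :=
  (∀ i, e i ≤ 1) ∧ (∃ N, ∀ i, N ≤ i → e i = 0) ∧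
  (n = ∑' i : ℕ, e i * S i) ∧
  (∀ i, (e i = 1 ↔ IsGreatest {j | S j ≤ n - tailSum S e i} i))

/-- The number-system space `E` associated to a kneading map `Q`. -/
def Eset (Q : ℕ → ℕ) : Set (ℕ → ℕ) :=
  {e | (∀ i, e i ≤ 1) ∧ ∀ i j, e i = 1 → Q (i + 1) ≤ j → j < i → e j = 0}

namespace AlphaZeroAux

/-- The indicator digit sequence of a finite set of positions. -/
def finRep (F : Finset ℕ) : ℕ → ℕ := fun i => if i ∈ F then 1 else 0

/-- The canonical periodic sequence with ones at `r, r+d, r+2d, …` (for `r < d`). -/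
def erp (d r : ℕ) : ℕ → ℕ := fun i => if i % d = r then 1 else 0

lemma finRep_le (F : Finset ℕ) (i : ℕ) : finRep F i ≤ 1 := by
  unfold finRep; split_ifs <;> omega

lemma finRep_eq_one {F : Finset ℕ} {i : ℕ} : finRep F i = 1 ↔ i ∈ F := by
  unfold finRep; split_ifs with h <;> simp [h]

lemma finRep_eq_zero {F : Finset ℕ} {i : ℕ} : finRep F i = 0 ↔ i ∉ F := by
  unfold finRep; split_ifs with h <;> simp [h]

lemma sum_finRep (S : ℕ → ℕ) (F : Finset ℕ) {N : ℕ} (h : ∀ i ∈ F, i < N) :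
    ∑ k ∈ Finset.range N, finRep F k * S k = ∑ k ∈ F, S k := by
  have h1 : ∀ k ∈ Finset.range N, finRep F k * S k = if k ∈ F then S k else 0 := by
    intro k _; unfold finRep; split_ifs <;> ring
  rw [Finset.sum_congr rfl h1, Finset.sum_ite_mem,
    Finset.inter_eq_right.mpr (fun i hi => Finset.mem_range.mpr (h i hi))]

lemma mod_gap {d i j : ℕ} (hij : j < i) (hmod : i % d = j % d) : j + d ≤ i := by
  have h1 : d ∣ i - j := (Nat.modEq_iff_dvd' (le_of_lt hij)).mp hmod.symm
  have h2 : d ≤ i - j := Nat.le_of_dvd (by omega) h1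
  omega

lemma finRep_mem {d : ℕ} {Q : ℕ → ℕ} (hQdef : ∀ k, Q k = k - d) {F : Finset ℕ}
    (hadm : ∀ i ∈ F, ∀ j ∈ F, j < i → j + d ≤ i) : finRep F ∈ Eset Q := by
  refine ⟨finRep_le F, ?_⟩
  intro i j h1 h2 h3
  rw [finRep_eq_one] at h1
  rw [finRep_eq_zero]
  intro hj
  have := hadm i h1 j hj h3
  rw [hQdef] at h2
  omega

lemma head_lt {d : ℕ} {S Q : ℕ → ℕ} (hd : 1 ≤ d) (hQdef : ∀ k, Q k = k - d)
    (hS0 : S 0 = 1) (hmono : StrictMono S)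
    (hrec : ∀ k, 1 ≤ k → S k = S (k - 1) + S (Q k))
    {e : ℕ → ℕ} (he : e ∈ Eset Q) :
    ∀ i, ∑ k ∈ Finset.range i, e k * S k < S i := by
  intro i
  induction i using Nat.strong_induction_on with
  | _ i ih =>
    obtain _ | i := i
    · simp [hS0]
    · by_cases hei : e i = 1
      · have hz : ∀ j, i + 1 - d ≤ j → j < i → e j = 0 :=
          fun j hj1 hj2 => he.2 i j hei (by rw [hQdef]; omega) hj2
        have hsub : ∑ k ∈ Finset.range i, e k * S k
            = ∑ k ∈ Finset.range (i + 1 - d), e k * S k := by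
          symm
          apply Finset.sum_subset (Finset.range_subset_range.mpr (by omega))
          intro x hx hx'
          simp only [Finset.mem_range] at hx hx'
          rw [hz x (by omega) hx]
          ring
        have h1 := ih (i + 1 - d) (by omega)
        have h2 := hrec (i + 1) (by omega)
        rw [hQdef] at h2
        simp only [Nat.add_sub_cancel] at h2
        rw [Finset.sum_range_succ, hsub, hei, one_mul]
        omega
      · have hei0 : e i = 0 := by have := he.1 i; omega
        rw [Finset.sum_range_succ, hei0]
        have h1 := ih i (by omega)
        have h2 : S i < S (i + 1) := hmono (by omega)
        omega

lemma tailSum_eq {S e : ℕ → ℕ} {N : ℕ} (hN : ∀ i, N ≤ i → e i = 0) (i : ℕ) :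
    tailSum S e i = ∑ k ∈ Finset.Ico (i + 1) N, e k * S k := by
  unfold tailSum
  rw [tsum_eq_sum (s := Finset.Ico (i + 1) N) ?hv]
  · apply Finset.sum_congr rfl
    intro k hk
    simp only [Finset.mem_Ico] at hk
    rw [if_pos (by omega)]
  case hv =>
    intro b hb
    simp only [Finset.mem_Ico, not_and, not_lt] at hb
    by_cases h : i < b
    · rw [if_pos h, hN b (hb (by omega)), zero_mul]
    · rw [if_neg h]

lemma isGreedy_of_adm {d : ℕ} {S Q : ℕ → ℕ} (hd : 1 ≤ d) (hQdef : ∀ k, Q k = k - d)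
    (hS0 : S 0 = 1) (hmono : StrictMono S)
    (hrec : ∀ k, 1 ≤ k → S k = S (k - 1) + S (Q k))
    {e : ℕ → ℕ} (he : e ∈ Eset Q) {N n : ℕ} (hN : ∀ i, N ≤ i → e i = 0)
    (hn : n = ∑ k ∈ Finset.range N, e k * S k) :
    IsGreedyRep S n e := by
  have hsplit : ∀ i, n = (∑ k ∈ Finset.range (i + 1), e k * S k)
      + ∑ k ∈ Finset.Ico (i + 1) N, e k * S k := by
    intro i
    rcases Nat.le_total (i + 1) N with h | h
    · rw [hn, Finset.range_eq_Ico, Finset.range_eq_Ico]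
      exact (Finset.sum_Ico_consecutive (fun k => e k * S k) (Nat.zero_le (i + 1)) h).symm
    · rw [Finset.Ico_eq_empty (by omega), Finset.sum_empty, add_zero, hn]
      apply Finset.sum_subset (Finset.range_subset_range.mpr h)
      intro x hx hx'
      simp only [Finset.mem_range, not_lt] at hx hx'
      rw [hN x hx', zero_mul]
  have hhead : ∀ i, n - tailSum S e i = ∑ k ∈ Finset.range (i + 1), e k * S k := by
    intro i
    rw [tailSum_eq hN]
    have := hsplit i
    omega
  unfold IsGreedyRep
  refine ⟨he.1, ⟨N, hN⟩, ?_, ?_⟩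
  · rw [hn]
    exact (tsum_eq_sum (fun b hb => by
      rw [hN b (by simpa using hb), zero_mul])).symm
  · intro i
    rw [hhead i]
    constructor
    · intro h1
      constructor
      · show S i ≤ _
        calc S i = e i * S i := by rw [h1, one_mul]
        _ ≤ ∑ k ∈ Finset.range (i + 1), e k * S k :=
          Finset.single_le_sum (f := fun k => e k * S k) (fun k _ => Nat.zero_le _)
            (Finset.self_mem_range_succ i)
      · intro j hj
        have hj' : S j ≤ ∑ k ∈ Finset.range (i + 1), e k * S k := hj
        have h2 : S j < S (i + 1) :=
          lt_of_le_of_lt hj' (head_lt hd hQdef hS0 hmono hrec he (i + 1))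
        exact Nat.lt_succ_iff.mp (hmono.lt_iff_lt.mp h2)
    · intro h2
      have h3 : S i ≤ ∑ k ∈ Finset.range (i + 1), e k * S k := h2.1
      by_contra h0
      have hei0 : e i = 0 := by have := he.1 i; omega
      rw [Finset.sum_range_succ, hei0, zero_mul, add_zero] at h3
      exact absurd h3 (not_le.mpr (head_lt hd hQdef hS0 hmono hrec he i))

lemma greedy_unique {S : ℕ → ℕ} {e e' : ℕ → ℕ} {n : ℕ}
    (h : IsGreedyRep S n e) (h' : IsGreedyRep S n e') : e = e' := by
  unfold IsGreedyRep at h h'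
  obtain ⟨hle, ⟨N1, hN1⟩, hsum, hiff⟩ := h
  obtain ⟨hle', ⟨N2, hN2⟩, hsum', hiff'⟩ := h'
  have key : ∀ t k, max N1 N2 - t ≤ k → e k = e' k := by
    intro t
    induction t with
    | zero => intro k hk; rw [hN1 k (by omega), hN2 k (by omega)]
    | succ t ih =>
      intro k hk
      rcases Nat.lt_or_ge k (max N1 N2 - t) with h1 | h1
      · have htail : tailSum S e k = tailSum S e' k := by
          unfold tailSum
          apply tsum_congr
          intro j
          by_cases hj : k < j
          · rw [if_pos hj, if_pos hj, ih j (by omega)]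
          · rw [if_neg hj, if_neg hj]
        have hset : {j | S j ≤ n - tailSum S e k} = {j | S j ≤ n - tailSum S e' k} := by
          rw [htail]
        have h1e := hiff k
        have h2e := hiff' k
        rw [hset] at h1e
        have hiffk : e k = 1 ↔ e' k = 1 := h1e.trans h2e.symm
        have := hle k; have := hle' k
        omega
      · exact ih k h1
  funext k
  exact key (max N1 N2) k (by omega)

lemma exists_adm_rep {d : ℕ} {S : ℕ → ℕ} (hd : 1 ≤ d) (hS0 : S 0 = 1) (hmono : StrictMono S)
    (hrecd : ∀ k, 1 ≤ k → S k = S (k - 1) + S (k - d)) :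
    ∀ n : ℕ, ∃ F : Finset ℕ,
      (∀ i ∈ F, ∀ j ∈ F, j < i → j + d ≤ i) ∧ (∀ j ∈ F, S j ≤ n) ∧ ∑ j ∈ F, S j = n := by
  intro n
  induction n using Nat.strong_induction_on with
  | _ n ih =>
    rcases Nat.eq_zero_or_pos n with rfl | hn
    · exact ⟨∅, by simp, by simp, by simp⟩
    · have hex : ∃ i, S i ≤ n ∧ n < S (i + 1) := by
        refine ⟨Nat.findGreatest (fun i => S i ≤ n) n, ?_, ?_⟩
        · exact Nat.findGreatest_spec (P := fun i => S i ≤ n) (Nat.zero_le n)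
            (show S 0 ≤ n by rw [hS0]; omega)
        · by_contra hcon
          push_neg at hcon
          exact Nat.findGreatest_is_greatest (Nat.lt_succ_self _)
            (le_trans hmono.le_apply hcon) hcon
      obtain ⟨i, hi1, hi2⟩ := hex
      have hSi : 1 ≤ S i := by
        have := hmono.monotone (Nat.zero_le i); omega
      obtain ⟨F, hadm, hFb, hFs⟩ := ih (n - S i) (by omega)
      have hrec' := hrecd (i + 1) (by omega)
      simp only [Nat.add_sub_cancel] at hrec'
      have hkey : n - S i < S (i + 1 - d) := by omega
      have hFlt : ∀ j ∈ F, j + d ≤ i := by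
        intro j hj
        have h1 : S j ≤ n - S i := hFb j hj
        have h2 : S j < S (i + 1 - d) := by omega
        have h3 : j < i + 1 - d := hmono.lt_iff_lt.mp h2
        omega
      have hiF : i ∉ F := fun hif => by have := hFlt i hif; omega
      refine ⟨insert i F, ?_, ?_, ?_⟩
      · intro a ha b hb hba
        rcases Finset.mem_insert.mp ha with rfl | ha'
        · rcases Finset.mem_insert.mp hb with rfl | hb'
          · omega
          · exact hFlt b hb'
        · rcases Finset.mem_insert.mp hb with rfl | hb'
          · exfalso; have := hFlt a ha'; omega
          · exact hadm a ha' b hb' hba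
      · intro j hj
        rcases Finset.mem_insert.mp hj with rfl | hj'
        · exact hi1
        · have := hFb j hj'; omega
      · rw [Finset.sum_insert hiF, hFs]; omega

lemma sum_id {d : ℕ} {S : ℕ → ℕ} (hS0 : S 0 = 1)
    (hrecd : ∀ k, 1 ≤ k → S k = S (k - 1) + S (k - d))
    {r : ℕ} (hr : r < d) :
    ∀ m, (∑ j ∈ Finset.range (m + 1), S (r + j * d)) + 1 = S (r + m * d + 1) := by
  intro m
  induction m with
  | zero =>
    have h := hrecd (r + 1) (by omega)
    have h0 : r + 1 - d = 0 := by omega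
    rw [h0] at h
    simp only [Nat.add_sub_cancel] at h
    rw [Finset.sum_range_one]
    simp only [Nat.zero_mul, Nat.add_zero]
    rw [h, hS0]
  | succ m ih =>
    have h := hrecd (r + (m + 1) * d + 1) (by omega)
    have h1 : r + (m + 1) * d + 1 - 1 = r + (m + 1) * d := by omega
    have h2 : r + (m + 1) * d + 1 - d = r + m * d + 1 := by
      rw [Nat.succ_mul]; omega
    rw [h1, h2] at h
    rw [Finset.sum_range_succ]
    omega

end AlphaZeroAux

open AlphaZeroAux in
/-- If the kneading map is `Q(k) = max(0, k − d)` for a fixed `d ≥ 1`, then the zero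
sequence `⟨0⟩` has exactly `d` preimages under the add-and-carry map `α` on `E`. -/
theorem alpha_zero_has_d_preimages (d : ℕ) (hd : 1 ≤ d) (S Q : ℕ → ℕ)
    (hQdef : ∀ k, Q k = k - d)
    (hS0 : S 0 = 1) (hmono : StrictMono S)
    (hrec : ∀ k, 1 ≤ k → S k = S (k - 1) + S (Q k))
    (α : (ℕ → ℕ) → (ℕ → ℕ))
    (hmaps : Set.MapsTo α (Eset Q) (Eset Q))
    (hcont : ContinuousOn α (Eset Q))
    (hagree : ∀ (n : ℕ) (e e' : ℕ → ℕ),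
      IsGreedyRep S n e → IsGreedyRep S (n + 1) e' → α e = e')
    (hclos : Eset Q = closure {e | ∃ n : ℕ, IsGreedyRep S n e}) :
    {e | e ∈ Eset Q ∧ α e = fun _ => 0}.ncard = d := by
  classical
  have hd0 : 0 < d := by omega
  have hrecd : ∀ k, 1 ≤ k → S k = S (k - 1) + S (k - d) := by
    intro k hk; have := hrec k hk; rwa [hQdef] at this
  have hSpos : ∀ k, 1 ≤ S k := by
    intro k
    have := hmono.monotone (Nat.zero_le k)
    omega
  -- membership of periodic sequences
  have her_mem : ∀ r, r < d → erp d r ∈ Eset Q := by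
    intro r hr
    refine ⟨fun i => by unfold erp; split_ifs <;> omega, ?_⟩
    intro i j h1 h2 h3
    unfold erp at h1 ⊢
    rw [hQdef] at h2
    have hi : i % d = r := by
      by_contra hc; rw [if_neg hc] at h1; omega
    split_ifs with hj
    · have := mod_gap h3 (hi.trans hj.symm)
      omega
    · rfl
  -- forward: α (erp d r) = 0
  have her_alpha : ∀ r, r < d → α (erp d r) = fun _ => 0 := by
    intro r hr
    have hFmem : ∀ m i, i ∈ (Finset.range (m + 1)).image (fun j => r + j * d) ↔
        ∃ j, j < m + 1 ∧ r + j * d = i := by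
      intro m i; simp [Finset.mem_image, Finset.mem_range]
    have hb : ∀ m, ∀ i ∈ (Finset.range (m + 1)).image (fun j => r + j * d),
        i < r + m * d + 1 := by
      intro m i hi
      obtain ⟨j, hj, rfl⟩ := (hFmem m i).mp hi
      have : j * d ≤ m * d := Nat.mul_le_mul_right d (by omega)
      omega
    have hadm : ∀ m, ∀ i ∈ (Finset.range (m + 1)).image (fun j => r + j * d),
        ∀ j ∈ (Finset.range (m + 1)).image (fun j => r + j * d), j < i → j + d ≤ i := by
      intro m i hi j hj hij
      obtain ⟨a, _, rfl⟩ := (hFmem m i).mp hi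
      obtain ⟨b, _, rfl⟩ := (hFmem m j).mp hj
      have hba : b < a := by
        by_contra hc
        push_neg at hc
        have : a * d ≤ b * d := Nat.mul_le_mul_right d hc
        omega
      have h3 : (b + 1) * d ≤ a * d := Nat.mul_le_mul_right d (Nat.succ_le_of_lt hba)
      rw [Nat.succ_mul] at h3
      omega
    have key : ∀ m : ℕ, α (finRep ((Finset.range (m + 1)).image (fun j => r + j * d)))
        = finRep {r + m * d + 1} := by
      intro m
      have hzero : ∀ i, r + m * d + 1 ≤ i →
          finRep ((Finset.range (m + 1)).image (fun j => r + j * d)) i = 0 := by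
        intro i hi
        exact finRep_eq_zero.mpr (fun hc => by have := hb m i hc; omega)
      have hsum : ∑ k ∈ Finset.range (r + m * d + 1),
          finRep ((Finset.range (m + 1)).image (fun j => r + j * d)) k * S k
          = S (r + m * d + 1) - 1 := by
        rw [sum_finRep S _ (hb m),
          Finset.sum_image (fun a _ b _ hab =>
            Nat.eq_of_mul_eq_mul_right hd0 (by omega : a * d = b * d))]
        have := sum_id hS0 hrecd hr m
        omega
      have hG1 : IsGreedyRep S (S (r + m * d + 1) - 1)
          (finRep ((Finset.range (m + 1)).image (fun j => r + j * d))) := by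
        have := isGreedy_of_adm hd hQdef hS0 hmono hrec (finRep_mem hQdef (hadm m)) hzero rfl
        rwa [hsum] at this
      have hG2 : IsGreedyRep S (S (r + m * d + 1) - 1 + 1) (finRep {r + m * d + 1}) := by
        have hone : S (r + m * d + 1) - 1 + 1 = S (r + m * d + 1) := by
          have := hSpos (r + m * d + 1); omega
        rw [hone]
        have hadm2 : ∀ i ∈ ({r + m * d + 1} : Finset ℕ), ∀ j ∈ ({r + m * d + 1} : Finset ℕ),
            j < i → j + d ≤ i := by
          intro i hi j hj hij; simp only [Finset.mem_singleton] at hi hj; omega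
        have hzero2 : ∀ i, r + m * d + 2 ≤ i → finRep ({r + m * d + 1} : Finset ℕ) i = 0 := by
          intro i hi
          exact finRep_eq_zero.mpr (by simp only [Finset.mem_singleton]; omega)
        have := isGreedy_of_adm hd hQdef hS0 hmono hrec (finRep_mem hQdef hadm2) hzero2 rfl
        have hsum2 : ∑ k ∈ Finset.range (r + m * d + 2),
            finRep ({r + m * d + 1} : Finset ℕ) k * S k = S (r + m * d + 1) := by
          rw [sum_finRep S _ (by intro i hi; simp only [Finset.mem_singleton] at hi; omega),
            Finset.sum_singleton]
        rwa [hsum2] at this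
      exact hagree _ _ _ hG1 hG2
    have htg : Filter.Tendsto
        (fun m => finRep ((Finset.range (m + 1)).image (fun j => r + j * d)))
        Filter.atTop (nhdsWithin (erp d r) (Eset Q)) := by
      rw [tendsto_nhdsWithin_iff]
      constructor
      · rw [tendsto_pi_nhds]
        intro i
        refine Filter.Tendsto.congr' ?_ tendsto_const_nhds
        filter_upwards [Filter.eventually_ge_atTop i] with m hm
        by_cases hmod : i % d = r
        · have hmem : i ∈ (Finset.range (m + 1)).image (fun j => r + j * d) := by
            rw [hFmem]
            refine ⟨i / d, ?_, ?_⟩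
            · exact lt_of_le_of_lt (le_trans (Nat.div_le_self i d) hm) (Nat.lt_succ_self m)
            · have h2 := Nat.div_add_mod' i d
              omega
          simp [erp, finRep, hmod, hmem]
        · have hmem : i ∉ (Finset.range (m + 1)).image (fun j => r + j * d) := by
            rw [hFmem]
            rintro ⟨j, _, rfl⟩
            apply hmod
            rw [Nat.add_mul_mod_self_right, Nat.mod_eq_of_lt hr]
          simp [erp, finRep, hmod, hmem]
      · exact Filter.Eventually.of_forall (fun m => finRep_mem hQdef (hadm m))
    have halim : Filter.Tendsto
        (fun m => α (finRep ((Finset.range (m + 1)).image (fun j => r + j * d))))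
        Filter.atTop (nhds (α (erp d r))) :=
      Filter.Tendsto.comp (hcont (erp d r) (her_mem r hr)) htg
    have hzlim : Filter.Tendsto
        (fun m => α (finRep ((Finset.range (m + 1)).image (fun j => r + j * d))))
        Filter.atTop (nhds (fun _ => 0 : ℕ → ℕ)) := by
      simp only [key]
      rw [tendsto_pi_nhds]
      intro i
      refine Filter.Tendsto.congr' ?_ tendsto_const_nhds
      filter_upwards [Filter.eventually_ge_atTop i] with m hm
      have hmd : m ≤ m * d := Nat.le_mul_of_pos_right m hd0
      symm
      exact finRep_eq_zero.mpr (by simp only [Finset.mem_singleton]; omega)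
    exact tendsto_nhds_unique halim hzlim
  -- greedy representations live in E
  have hGR_sub : {f : ℕ → ℕ | ∃ n, IsGreedyRep S n f} ⊆ Eset Q := by
    rw [hclos]; exact subset_closure
  -- reverse direction
  have hrev : ∀ e, e ∈ Eset Q → α e = (fun _ => 0) → ∃ r, r < d ∧ e = erp d r := by
    intro e he hae
    have hstep : ∀ M : ℕ, ∃ r, r < d ∧ ∀ i, i ≤ M → e i = erp d r i := by
      intro M
      have hWopen : IsOpen {f : ℕ → ℕ | ∀ i, i ≤ M → f i = 0} := by
        have heq : {f : ℕ → ℕ | ∀ i, i ≤ M → f i = 0}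
            = ⋂ i : Fin (M + 1), {f : ℕ → ℕ | f i.val = 0} := by
          ext f
          simp only [Set.mem_setOf_eq, Set.mem_iInter]
          constructor
          · intro hf i; exact hf i.val (by omega)
          · intro hf i hi; exact hf ⟨i, by omega⟩
        rw [heq]
        refine isOpen_iInter_of_finite fun i => ?_
        have hpre : {f : ℕ → ℕ | f i.val = 0} = (fun f : ℕ → ℕ => f i.val) ⁻¹' {0} := rfl
        rw [hpre]
        exact (continuous_apply (i.val)).isOpen_preimage _ (isOpen_discrete _)
      have hUopen : IsOpen {f : ℕ → ℕ | ∀ i, i ≤ M → f i = e i} := by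
        have heq : {f : ℕ → ℕ | ∀ i, i ≤ M → f i = e i}
            = ⋂ i : Fin (M + 1), {f : ℕ → ℕ | f i.val = e i.val} := by
          ext f
          simp only [Set.mem_setOf_eq, Set.mem_iInter]
          constructor
          · intro hf i; exact hf i.val (by omega)
          · intro hf i hi; exact hf ⟨i, by omega⟩
        rw [heq]
        refine isOpen_iInter_of_finite fun i => ?_
        have hpre : {f : ℕ → ℕ | f i.val = e i.val}
            = (fun f : ℕ → ℕ => f i.val) ⁻¹' {e i.val} := rfl
        rw [hpre]
        exact (continuous_apply (i.val)).isOpen_preimage _ (isOpen_discrete _)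
      have hWnh : {f : ℕ → ℕ | ∀ i, i ≤ M → f i = 0} ∈ nhds (α e) := by
        apply hWopen.mem_nhds
        rw [hae]
        exact fun i _ => rfl
      have hpre : α ⁻¹' {f : ℕ → ℕ | ∀ i, i ≤ M → f i = 0} ∈ nhdsWithin e (Eset Q) :=
        hcont e he hWnh
      rw [mem_nhdsWithin] at hpre
      obtain ⟨u, huo, heu, hsub⟩ := hpre
      have hmem : e ∈ u ∩ {f : ℕ → ℕ | ∀ i, i ≤ M → f i = e i} := ⟨heu, fun i _ => rfl⟩
      have hecl : e ∈ closure {f : ℕ → ℕ | ∃ n, IsGreedyRep S n f} := by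
        rw [← hclos]; exact he
      obtain ⟨g, ⟨hgu, hgU⟩, n, hgG⟩ :=
        mem_closure_iff.mp hecl _ (huo.inter hUopen) hmem
      have hgE : g ∈ Eset Q := hGR_sub ⟨n, hgG⟩
      have hgW : ∀ i, i ≤ M → α g i = 0 := hsub ⟨hgu, hgE⟩
      obtain ⟨F', hadm', hFb', hFs'⟩ := exists_adm_rep hd hS0 hmono hrecd (n + 1)
      have hF'G : IsGreedyRep S (n + 1) (finRep F') := by
        have hb : ∀ i ∈ F', i < F'.sup id + 1 :=
          fun i hi => Nat.lt_succ_of_le (Finset.le_sup (f := id) hi)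
        have := isGreedy_of_adm hd hQdef hS0 hmono hrec (finRep_mem hQdef hadm')
          (N := F'.sup id + 1)
          (fun i hi => finRep_eq_zero.mpr (fun hc => by have := hb i hc; omega)) rfl
        rwa [sum_finRep S F' hb, hFs'] at this
      have hα : α g = finRep F' := hagree n g (finRep F') hgG hF'G
      have hF'ne : F'.Nonempty := by
        rcases Finset.eq_empty_or_nonempty F' with rfl | h
        · simp at hFs'
        · exact h
      set q := F'.min' hF'ne with hq
      have hqF : q ∈ F' := F'.min'_mem hF'ne
      have hqmin : ∀ j ∈ F', q ≤ j := fun j hj => F'.min'_le j hj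
      have hqM : M < q := by
        by_contra hc
        push_neg at hc
        have h0 : finRep F' q = 0 := by rw [← hα]; exact hgW q hc
        rw [finRep_eq_zero] at h0
        exact h0 hqF
      set r := (q - 1) % d with hrdef
      set m := (q - 1) / d with hmdef
      have hr : r < d := Nat.mod_lt _ (by omega)
      have hqd : q = r + m * d + 1 := by
        have h1 := Nat.div_add_mod' (q - 1) d
        rw [← hmdef, ← hrdef] at h1
        omega
      have himage_lt : ∀ i ∈ (Finset.range (m + 1)).image (fun j => r + j * d), i < q := by
        intro i hi
        simp only [Finset.mem_image, Finset.mem_range] at hi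
        obtain ⟨j, hj, rfl⟩ := hi
        have : j * d ≤ m * d := Nat.mul_le_mul_right d (by omega)
        omega
      have herase_gt : ∀ i ∈ F'.erase q, q < i := by
        intro i hi
        rw [Finset.mem_erase] at hi
        have := hqmin i hi.2
        omega
      have hdisj : Disjoint ((Finset.range (m + 1)).image (fun j => r + j * d)) (F'.erase q) := by
        rw [Finset.disjoint_left]
        intro a ha ha'
        have h1 := himage_lt a ha
        have h2 := herase_gt a ha'
        omega
      have hF2sum : ∑ j ∈ ((Finset.range (m + 1)).image (fun j => r + j * d)) ∪ F'.erase q,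
          S j = n := by
        rw [Finset.sum_union hdisj,
          Finset.sum_image (fun a _ b _ hab =>
            Nat.eq_of_mul_eq_mul_right hd0 (by omega : a * d = b * d))]
        have h1 := sum_id hS0 hrecd hr m
        have h2 : ∑ x ∈ F'.erase q, S x + S q = n + 1 := by
          rw [Finset.sum_erase_add _ _ hqF, hFs']
        rw [← hqd] at h1
        have hSq : 1 ≤ S q := hSpos q
        omega
      have hF2adm : ∀ i ∈ ((Finset.range (m + 1)).image (fun j => r + j * d)) ∪ F'.erase q,
          ∀ j ∈ ((Finset.range (m + 1)).image (fun j => r + j * d)) ∪ F'.erase q,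
          j < i → j + d ≤ i := by
        intro i hi j hj hij
        rw [Finset.mem_union] at hi hj
        rcases hi with hi | hi
        · rcases hj with hj | hj
          · simp only [Finset.mem_image, Finset.mem_range] at hi hj
            obtain ⟨a, _, rfl⟩ := hi
            obtain ⟨b, _, rfl⟩ := hj
            have hba : b < a := by
              by_contra hc
              push_neg at hc
              have : a * d ≤ b * d := Nat.mul_le_mul_right d hc
              omega
            have h3 : (b + 1) * d ≤ a * d := Nat.mul_le_mul_right d (Nat.succ_le_of_lt hba)
            rw [Nat.succ_mul] at h3
            omega
          · exfalso
            have h1 := himage_lt i hi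
            have h2 := herase_gt j hj
            omega
        · rcases hj with hj | hj
          · have h1 : q < i := herase_gt i hi
            have h2 : j < q := himage_lt j hj
            have h3 : q + d ≤ i := by
              rw [Finset.mem_erase] at hi
              exact hadm' i hi.2 q hqF h1
            omega
          · rw [Finset.mem_erase] at hi hj
            exact hadm' i hi.2 j hj.2 hij
      have hF2G : IsGreedyRep S n
          (finRep (((Finset.range (m + 1)).image (fun j => r + j * d)) ∪ F'.erase q)) := by
        have hb : ∀ i ∈ ((Finset.range (m + 1)).image (fun j => r + j * d)) ∪ F'.erase q,
            i < (((Finset.range (m + 1)).image (fun j => r + j * d)) ∪ F'.erase q).sup id + 1 :=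
          fun i hi => Nat.lt_succ_of_le (Finset.le_sup (f := id) hi)
        have := isGreedy_of_adm hd hQdef hS0 hmono hrec (finRep_mem hQdef hF2adm)
          (N := (((Finset.range (m + 1)).image (fun j => r + j * d)) ∪ F'.erase q).sup id + 1)
          (fun i hi => finRep_eq_zero.mpr (fun hc => by have := hb i hc; omega)) rfl
        rwa [sum_finRep S _ hb, hF2sum] at this
      have hgF2 : g = finRep (((Finset.range (m + 1)).image (fun j => r + j * d)) ∪ F'.erase q) :=
        greedy_unique hgG hF2G
      refine ⟨r, hr, ?_⟩
      intro i hiM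
      have h1 : e i = g i := (hgU i hiM).symm
      rw [h1, hgF2]
      have hiq : i < q := by omega
      have hiF2 : i ∈ ((Finset.range (m + 1)).image (fun j => r + j * d)) ∪ F'.erase q
          ↔ i % d = r := by
        rw [Finset.mem_union]
        constructor
        · rintro (h | h)
          · simp only [Finset.mem_image, Finset.mem_range] at h
            obtain ⟨j, _, rfl⟩ := h
            rw [Nat.add_mul_mod_self_right, Nat.mod_eq_of_lt hr]
          · exfalso; have := herase_gt i h; omega
        · intro h
          left
          simp only [Finset.mem_image, Finset.mem_range]
          refine ⟨i / d, ?_, ?_⟩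
          · have h2 := Nat.div_add_mod' i d
            have h3 : i / d * d ≤ m * d := by omega
            have h4 := Nat.le_of_mul_le_mul_right h3 hd0
            omega
          · have h2 := Nat.div_add_mod' i d
            omega
      show finRep _ i = erp d r i
      unfold finRep erp
      split_ifs with hif her
      · rfl
      · exact absurd (hiF2.mp hif) her
      · exact absurd (hiF2.mpr (by assumption)) hif
      · rfl
    choose rr hrr1 hrr2 using hstep
    obtain ⟨y, hy⟩ := Finite.exists_infinite_fiber (fun M => (⟨rr M, hrr1 M⟩ : Fin d))
    have hyinf : ((fun M => (⟨rr M, hrr1 M⟩ : Fin d)) ⁻¹' {y}).Infinite :=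
      Set.infinite_coe_iff.mp hy
    refine ⟨y.val, y.isLt, ?_⟩
    funext i
    obtain ⟨M, hM1, hM2⟩ := hyinf.exists_gt i
    simp only [Set.mem_preimage, Set.mem_singleton_iff] at hM1
    have h3 : rr M = y.val := congrArg Fin.val hM1
    have h4 := hrr2 M i (le_of_lt hM2)
    rw [h3] at h4
    exact h4
  -- conclude
  have hseteq : {e | e ∈ Eset Q ∧ α e = fun _ => 0} = erp d '' Set.Iio d := by
    ext f
    simp only [Set.mem_setOf_eq, Set.mem_image, Set.mem_Iio]
    constructor
    · rintro ⟨hf, hfa⟩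
      obtain ⟨r, hr, rfl⟩ := hrev f hf hfa
      exact ⟨r, hr, rfl⟩
    · rintro ⟨r, hr, rfl⟩
      exact ⟨her_mem r hr, her_alpha r hr⟩
  rw [hseteq, Set.ncard_image_of_injOn ?hinj]
  · rw [show (Set.Iio d : Set ℕ) = ↑(Finset.range d) by ext x; simp,
      Set.ncard_coe_finset, Finset.card_range]
  case hinj =>
    intro a ha b hb hab
    simp only [Set.mem_Iio] at ha hb
    have hval := congrFun hab a
    unfold erp at hval
    rw [Nat.mod_eq_of_lt ha] at hval
    by_contra hne
    rw [if_pos rfl, if_neg hne] at hval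
    exact one_ne_zero hval
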